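/- Let u ∈ W^{2,1}(a,b) and Φ ∈ W^{2,1}(A,B) with |Φ'| > 0 on [A,B] and Φ([A,B]) = [a,b]. Then u∘Φ ∈ W^{2,1}(A,B) with (u∘Φ)' = (u'∘Φ)Φ' and (u∘Φ)'' = (u''∘Φ)(Φ')² + (u'∘Φ)Φ''. Moreover the inverse function Ψ of Φ belongs to W^{2,1}(a,b) with Ψ' = 1/(Φ'∘Ψ) and Ψ'' = −(Φ''∘Ψ)/(Φ'∘Ψ)³. -/

import Mathlib

open Real Set MeasureTheory intervalIntegral

/-- second-order chain rule and inverse-function formulas for `W^{2,1}`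
changes of variables: if `u ∈ W^{2,1}(a,b)`, `Φ ∈ W^{2,1}(A,B)` with `|Φ'| > 0` and
`Φ([A,B]) = [a,b]`, then `u∘Φ ∈ W^{2,1}(A,B)` with the chain-rule formulas, and the
inverse `Ψ` of `Φ` belongs to `W^{2,1}(a,b)` with `Ψ' = 1/(Φ'∘Ψ)` and
`Ψ'' = −(Φ''∘Ψ)/(Φ'∘Ψ)³`.  `W^{2,1}` is modelled by everywhere twice differentiable
functions with interval-integrable second derivative. -/
theorem chain_rule_W21
    (a b A B : ℝ) (hab : a < b) (hAB : A < B)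
    (u : ℝ → ℝ)
    (hu : ∀ x, DifferentiableAt ℝ u x) (hu' : ∀ x, DifferentiableAt ℝ (deriv u) x)
    (huint : IntervalIntegrable (deriv (deriv u)) volume a b)
    (Φ : ℝ → ℝ)
    (hΦ : ∀ y, DifferentiableAt ℝ Φ y) (hΦ' : ∀ y, DifferentiableAt ℝ (deriv Φ) y)
    (hΦint : IntervalIntegrable (deriv (deriv Φ)) volume A B)
    (hΦreg : ∀ y ∈ Icc A B, deriv Φ y ≠ 0)
    (hΦonto : Φ '' Icc A B = Icc a b) :
    -- chain rule for u ∘ Φ, and u∘Φ ∈ W^{2,1}(A,B)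
    ((∀ y ∈ Icc A B, deriv (u ∘ Φ) y = deriv u (Φ y) * deriv Φ y) ∧
     (∀ y ∈ Icc A B, deriv (deriv (u ∘ Φ)) y =
        deriv (deriv u) (Φ y) * (deriv Φ y) ^ 2 + deriv u (Φ y) * deriv (deriv Φ) y) ∧
     IntervalIntegrable (deriv (deriv (u ∘ Φ))) volume A B) ∧
    -- the inverse Ψ of Φ and its formulas, and Ψ ∈ W^{2,1}(a,b)
    (∃ Ψ : ℝ → ℝ,
      (∀ y ∈ Icc A B, Ψ (Φ y) = y) ∧ (∀ x ∈ Icc a b, Φ (Ψ x) = x) ∧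
      (∀ x ∈ Ioo a b, deriv Ψ x = 1 / deriv Φ (Ψ x)) ∧
      (∀ x ∈ Ioo a b, deriv (deriv Ψ) x =
        -(deriv (deriv Φ) (Ψ x)) / (deriv Φ (Ψ x)) ^ 3) ∧
      IntervalIntegrable (deriv (deriv Ψ)) volume a b) := by
  have hAmem : A ∈ Icc A B := left_mem_Icc.2 hAB.le
  have hBmem : B ∈ Icc A B := right_mem_Icc.2 hAB.le
  have hΦc : Continuous Φ := continuous_iff_continuousAt.2 fun y => (hΦ y).continuousAt
  have hΦ'c : Continuous (deriv Φ) := continuous_iff_continuousAt.2 fun y => (hΦ' y).continuousAt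
  have hu'c : Continuous (deriv u) := continuous_iff_continuousAt.2 fun y => (hu' y).continuousAt
  -- first order chain rule, globally
  have hd1 : ∀ y, deriv (u ∘ Φ) y = deriv u (Φ y) * deriv Φ y := fun y =>
    ((hu (Φ y)).hasDerivAt.comp y (hΦ y).hasDerivAt).deriv
  have hd1' : deriv (u ∘ Φ) = fun y => deriv u (Φ y) * deriv Φ y := funext hd1
  -- second order chain rule, globally
  have hd2 : ∀ y, deriv (deriv (u ∘ Φ)) y =
      deriv (deriv u) (Φ y) * (deriv Φ y) ^ 2 + deriv u (Φ y) * deriv (deriv Φ) y := by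
    intro y
    rw [hd1']
    have h1 : HasDerivAt (fun z => deriv u (Φ z)) (deriv (deriv u) (Φ y) * deriv Φ y) y :=
      (hu' (Φ y)).hasDerivAt.comp y (hΦ y).hasDerivAt
    have h2 : HasDerivAt (fun z => deriv u (Φ z) * deriv Φ z) _ y := h1.mul (hΦ' y).hasDerivAt
    rw [h2.deriv]; ring
  -- sign dichotomy for deriv Φ on [A,B]
  have hsign : (∀ y ∈ Icc A B, 0 < deriv Φ y) ∨ (∀ y ∈ Icc A B, deriv Φ y < 0) := by
    by_contra h
    push_neg at h
    obtain ⟨⟨y1, hy1, hy1'⟩, ⟨y2, hy2, hy2'⟩⟩ := h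
    have h1 : deriv Φ y1 ≤ 0 := hy1'
    have h2 : 0 ≤ deriv Φ y2 := hy2'
    have hsub : uIcc y1 y2 ⊆ Icc A B := uIcc_subset_Icc hy1 hy2
    have h0 : (0:ℝ) ∈ uIcc (deriv Φ y1) (deriv Φ y2) := by
      rw [uIcc_of_le (h1.trans h2)]; exact ⟨h1, h2⟩
    obtain ⟨y0, hy0, hy0'⟩ := intermediate_value_uIcc (hΦ'c.continuousOn) h0
    exact hΦreg y0 (hsub hy0) hy0'
  -- strict monotonicity / antitonicity with endpoint values
  have hmono : (StrictMonoOn Φ (Icc A B) ∧ Φ A = a ∧ Φ B = b) ∨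
      (StrictAntiOn Φ (Icc A B) ∧ Φ A = b ∧ Φ B = a) := by
    have hImem : ∀ y ∈ Icc A B, Φ y ∈ Icc a b := fun y hy =>
      hΦonto ▸ mem_image_of_mem Φ hy
    have hasurj : ∃ y ∈ Icc A B, Φ y = a := by
      have : a ∈ Φ '' Icc A B := hΦonto ▸ left_mem_Icc.2 hab.le
      obtain ⟨y, hy, hy'⟩ := this; exact ⟨y, hy, hy'⟩
    have hbsurj : ∃ y ∈ Icc A B, Φ y = b := by
      have : b ∈ Φ '' Icc A B := hΦonto ▸ right_mem_Icc.2 hab.le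
      obtain ⟨y, hy, hy'⟩ := this; exact ⟨y, hy, hy'⟩
    rcases hsign with hpos | hneg
    · left
      have hm : StrictMonoOn Φ (Icc A B) :=
        strictMonoOn_of_deriv_pos (convex_Icc A B) hΦc.continuousOn
          (fun y hy => hpos y (interior_subset hy))
      refine ⟨hm, ?_, ?_⟩
      · obtain ⟨y, hy, hy'⟩ := hasurj
        have h1 : Φ A ≤ Φ y := hm.monotoneOn hAmem hy hy.1
        exact le_antisymm (hy' ▸ h1) (hImem A hAmem).1
      · obtain ⟨y, hy, hy'⟩ := hbsurj
        have h1 : Φ y ≤ Φ B := hm.monotoneOn hy hBmem hy.2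
        exact le_antisymm (hImem B hBmem).2 (hy' ▸ h1)
    · right
      have hm : StrictAntiOn Φ (Icc A B) :=
        strictAntiOn_of_deriv_neg (convex_Icc A B) hΦc.continuousOn
          (fun y hy => hneg y (interior_subset hy))
      refine ⟨hm, ?_, ?_⟩
      · obtain ⟨y, hy, hy'⟩ := hbsurj
        have h1 : Φ y ≤ Φ A := hm.antitoneOn hAmem hy hy.1
        exact le_antisymm (hImem A hAmem).2 (hy' ▸ h1)
      · obtain ⟨y, hy, hy'⟩ := hasurj
        have h1 : Φ B ≤ Φ y := hm.antitoneOn hy hBmem hy.2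
        exact le_antisymm (hy' ▸ h1) (hImem B hBmem).1
  have hinj : InjOn Φ (Icc A B) := hmono.elim (fun h => h.1.injOn) (fun h => h.1.injOn)
  -- change of variables integrability machinery
  have hkey : ∀ g : ℝ → ℝ, IntegrableOn g (Icc a b) volume ↔
      IntegrableOn (fun y => |deriv Φ y| • g (Φ y)) (Icc A B) volume := by
    intro g
    rw [← hΦonto]
    exact integrableOn_image_iff_integrableOn_abs_deriv_smul measurableSet_Icc
      (fun y _ => (hΦ y).hasDerivAt.hasDerivWithinAt) hinj g
  -- Part 1 integrability
  have hIΦ : ∀ y ∈ Icc A B, |deriv Φ y| ≠ 0 := fun y hy => abs_ne_zero.2 (hΦreg y hy)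
  have hint1 : IntervalIntegrable (deriv (deriv (u ∘ Φ))) volume A B := by
    have hg : IntegrableOn (deriv (deriv u)) (Icc a b) volume :=
      (integrableOn_Icc_iff_integrableOn_Ioc (by simp)).2
        ((intervalIntegrable_iff_integrableOn_Ioc_of_le hab.le).1 huint)
    have habs : IntegrableOn (fun y => |deriv Φ y| * deriv (deriv u) (Φ y)) (Icc A B) volume := by
      simpa [smul_eq_mul] using (hkey (deriv (deriv u))).1 hg
    have habs' : IntervalIntegrable (fun y => |deriv Φ y| * deriv (deriv u) (Φ y)) volume A B :=
      (intervalIntegrable_iff_integrableOn_Icc_of_le hAB.le).2 habs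
    have hcont : ContinuousOn (fun y => (deriv Φ y) ^ 2 / |deriv Φ y|) (uIcc A B) := by
      rw [uIcc_of_le hAB.le]
      exact ContinuousOn.div ((hΦ'c.pow 2).continuousOn) (hΦ'c.abs.continuousOn) hIΦ
    have hterm1 : IntervalIntegrable
        (fun y => (deriv Φ y) ^ 2 / |deriv Φ y| * (|deriv Φ y| * deriv (deriv u) (Φ y)))
        volume A B := habs'.continuousOn_mul hcont
    have hterm1' : IntegrableOn (fun y => deriv (deriv u) (Φ y) * (deriv Φ y) ^ 2)
        (Icc A B) volume := by
      refine (((intervalIntegrable_iff_integrableOn_Icc_of_le hAB.le).1 hterm1).congr_fun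
        ?_ measurableSet_Icc)
      intro y hy
      have h0 : |deriv Φ y| ≠ 0 := hIΦ y hy
      field_simp
    have hterm2 : IntervalIntegrable (fun y => deriv u (Φ y) * deriv (deriv Φ) y) volume A B :=
      hΦint.continuousOn_mul ((hu'c.comp hΦc).continuousOn)
    have hsum := ((intervalIntegrable_iff_integrableOn_Icc_of_le hAB.le).2 hterm1').add hterm2
    have : deriv (deriv (u ∘ Φ)) = fun y =>
        deriv (deriv u) (Φ y) * (deriv Φ y) ^ 2 + deriv u (Φ y) * deriv (deriv Φ) y :=
      funext hd2
    rw [this]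
    exact hsum
  refine ⟨⟨fun y _ => hd1 y, fun y _ => hd2 y, hint1⟩, ?_⟩
  -- the inverse function
  set Ψ : ℝ → ℝ := Function.invFunOn Φ (Icc A B) with hΨdef
  have hleft : ∀ y ∈ Icc A B, Ψ (Φ y) = y := fun y hy => hinj.leftInvOn_invFunOn hy
  have hexists : ∀ x ∈ Icc a b, ∃ y ∈ Icc A B, Φ y = x := by
    intro x hx
    rw [← hΦonto] at hx
    obtain ⟨y, hy, hy'⟩ := hx
    exact ⟨y, hy, hy'⟩
  have hright : ∀ x ∈ Icc a b, Φ (Ψ x) = x := fun x hx =>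
    Function.invFunOn_eq (hexists x hx)
  have hΨmem : ∀ x ∈ Icc a b, Ψ x ∈ Icc A B := fun x hx =>
    Function.invFunOn_mem (hexists x hx)
  have hΨIoo : ∀ x ∈ Ioo a b, Ψ x ∈ Ioo A B := by
    intro x hx
    have hx' : x ∈ Icc a b := Ioo_subset_Icc_self hx
    have h1 : Ψ x ∈ Icc A B := hΨmem x hx'
    have hne : Φ A ≠ x ∧ Φ B ≠ x := by
      rcases hmono with ⟨_, hA, hB⟩ | ⟨_, hA, hB⟩
      · exact ⟨hA ▸ (ne_of_lt hx.1), hB ▸ (ne_of_gt hx.2)⟩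
      · exact ⟨hA ▸ (ne_of_gt hx.2), hB ▸ (ne_of_lt hx.1)⟩
    constructor
    · rcases eq_or_lt_of_le h1.1 with h | h
      · exact absurd (h ▸ hright x hx') hne.1
      · exact h
    · rcases eq_or_lt_of_le h1.2 with h | h
      · exact absurd (h ▸ hright x hx') hne.2
      · exact h
  have himage : Ψ '' Icc a b = Icc A B := by
    apply Subset.antisymm
    · rintro _ ⟨x, hx, rfl⟩; exact hΨmem x hx
    · intro y hy
      exact ⟨Φ y, hΦonto ▸ mem_image_of_mem Φ hy, hleft y hy⟩
  -- continuity of Ψ at interior points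
  have hΨcont : ∀ x ∈ Ioo a b, ContinuousAt Ψ x := by
    intro x hx
    have hx' : x ∈ Icc a b := Ioo_subset_Icc_self hx
    have hnx : Icc a b ∈ nhds x := Icc_mem_nhds hx.1 hx.2
    rcases hmono with ⟨hm, _, _⟩ | ⟨hm, _, _⟩
    · have hΨmono : StrictMonoOn Ψ (Icc a b) := by
        intro x1 h1 x2 h2 hlt
        by_contra hle
        push_neg at hle
        have := hm.monotoneOn (hΨmem x2 h2) (hΨmem x1 h1) hle
        rw [hright x2 h2, hright x1 h1] at this
        exact absurd hlt (not_lt.2 this)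
      refine hΨmono.continuousAt_of_image_mem_nhds hnx ?_
      rw [himage]
      exact Icc_mem_nhds (hΨIoo x hx).1 (hΨIoo x hx).2
    · have hΨmono : StrictMonoOn (fun x => -Ψ x) (Icc a b) := by
        intro x1 h1 x2 h2 hlt
        simp only [neg_lt_neg_iff]
        by_contra hle
        push_neg at hle
        have := hm.antitoneOn (hΨmem x1 h1) (hΨmem x2 h2) hle
        rw [hright x2 h2, hright x1 h1] at this
        exact absurd hlt (not_lt.2 this)
      have himage' : (fun x => -Ψ x) '' Icc a b = Icc (-B) (-A) := by
        have : (fun x => -Ψ x) '' Icc a b = Neg.neg '' (Ψ '' Icc a b) := by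
          rw [image_image]
        rw [this, himage, image_neg_Icc]
      have hc : ContinuousAt (fun x => -Ψ x) x := by
        refine hΨmono.continuousAt_of_image_mem_nhds hnx ?_
        rw [himage']
        exact Icc_mem_nhds (neg_lt_neg (hΨIoo x hx).2) (neg_lt_neg (hΨIoo x hx).1)
      have := hc.neg
      simpa only [Pi.neg_def, neg_neg] using this
  -- derivative of Ψ
  have hΨreg : ∀ x ∈ Ioo a b, deriv Φ (Ψ x) ≠ 0 := fun x hx =>
    hΦreg (Ψ x) (Ioo_subset_Icc_self (hΨIoo x hx))
  have hΨderiv : ∀ x ∈ Ioo a b, HasDerivAt Ψ (deriv Φ (Ψ x))⁻¹ x := by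
    intro x hx
    refine HasDerivAt.of_local_left_inverse (hΨcont x hx) (hΦ (Ψ x)).hasDerivAt
      (hΨreg x hx) ?_
    filter_upwards [Icc_mem_nhds hx.1 hx.2] with t ht
    exact hright t ht
  have hΨd1 : ∀ x ∈ Ioo a b, deriv Ψ x = 1 / deriv Φ (Ψ x) := by
    intro x hx
    rw [(hΨderiv x hx).deriv, one_div]
  -- second derivative of Ψ
  have hΨd2 : ∀ x ∈ Ioo a b, deriv (deriv Ψ) x =
      -(deriv (deriv Φ) (Ψ x)) / (deriv Φ (Ψ x)) ^ 3 := by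
    intro x hx
    have hEq : Set.EqOn (deriv Ψ) (fun t => (deriv Φ (Ψ t))⁻¹) (Ioo a b) := fun t ht =>
      (hΨderiv t ht).deriv
    have h1 : deriv (deriv Ψ) x = deriv (fun t => (deriv Φ (Ψ t))⁻¹) x := by
      apply Filter.EventuallyEq.deriv_eq
      filter_upwards [isOpen_Ioo.mem_nhds hx] with t ht
      exact hEq ht
    have hcomp : HasDerivAt (fun t => deriv Φ (Ψ t))
        (deriv (deriv Φ) (Ψ x) * (deriv Φ (Ψ x))⁻¹) x :=
      (hΦ' (Ψ x)).hasDerivAt.comp x (hΨderiv x hx)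
    have hinv : HasDerivAt (fun t => (deriv Φ (Ψ t))⁻¹) _ x := hcomp.inv (hΨreg x hx)
    rw [h1, hinv.deriv]
    have hc := hΨreg x hx
    field_simp
  -- integrability of deriv (deriv Ψ)
  have hint2 : IntervalIntegrable (deriv (deriv Ψ)) volume a b := by
    set g : ℝ → ℝ := fun x => -(deriv (deriv Φ) (Ψ x)) / (deriv Φ (Ψ x)) ^ 3 with hgdef
    have hcont : ContinuousOn (fun y => -(|deriv Φ y| / (deriv Φ y) ^ 3)) (uIcc A B) := by
      rw [uIcc_of_le hAB.le]
      exact (ContinuousOn.div (hΦ'c.abs.continuousOn) ((hΦ'c.pow 3).continuousOn)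
        (fun y hy => pow_ne_zero 3 (hΦreg y hy))).neg
    have hrhs : IntervalIntegrable
        (fun y => -(|deriv Φ y| / (deriv Φ y) ^ 3) * deriv (deriv Φ) y) volume A B :=
      hΦint.continuousOn_mul hcont
    have hrhs' : IntegrableOn (fun y => |deriv Φ y| • g (Φ y)) (Icc A B) volume := by
      refine ((intervalIntegrable_iff_integrableOn_Icc_of_le hAB.le).1 hrhs).congr_fun
        ?_ measurableSet_Icc
      intro y hy
      simp only [smul_eq_mul, hgdef]
      rw [hleft y hy]
      ring
    have hg : IntegrableOn g (Icc a b) volume := (hkey g).2 hrhs'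
    rw [intervalIntegrable_iff_integrableOn_Ioo_of_le hab.le]
    refine (hg.mono_set Ioo_subset_Icc_self).congr_fun ?_ measurableSet_Ioo
    intro x hx
    exact (hΨd2 x hx).symm
  exact ⟨Ψ, hleft, hright, hΨd1, hΨd2, hint2⟩
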